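/- (Non-contractivity of the Budgeted Bellman Optimality operator) Suppose |A| ≥ 2 and fix a₀ ∈ A. For every ε > 0 define bounded functions Q¹_ε, Q²_ε : S̄×Ā → ℝ² (coordinates written (Q_r, Q_c)) by Q¹_ε(s̄,(a,β_a)) = (0,0) if a = a₀ and (1/γ, ε) otherwise, and Q²_ε(s̄,(a,β_a)) = (0,ε) if a = a₀ and (1/γ, 2ε) otherwise. Then ‖Q¹_ε − Q²_ε‖∞ = ε, the greedy programs needed to evaluate T Q¹_ε and T Q²_ε at states with budget ε have unique solutions, and ‖T Q¹_ε − T Q²_ε‖∞ ≥ 1 = (1/ε)‖Q¹_ε − Q²_ε‖∞. Consequently T admits no Lipschitz constant with respect to ‖·‖∞: it is not a contraction. -/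

import Mathlib

/-- A countably-supported probability distribution on `α`. -/
structure CDist (α : Type) where
  p : α → ℝ
  nonneg : ∀ x, 0 ≤ p x
  countable_support : (Function.support p).Countable
  sum_one : ∑' x, p x = 1

/-- Expectation `E_{x∼ρ}[f(x)] = Σ'_x ρ(x) f(x)`. -/
noncomputable def Eexp {α : Type} (ρ : CDist α) (f : α → ℝ) : ℝ := ∑' x, ρ.p x * f x

/-- A function `Q : S̄ × Ā → ℝ²` is bounded (sup-norm wise). -/
def BoundedQ {S A : Type} (Q : (S × ℝ) → (A × ℝ) → ℝ × ℝ) : Prop :=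
  ∃ M : ℝ, ∀ sb ab, max |(Q sb ab).1| |(Q sb ab).2| ≤ M

/-- `ρ` solves the greedy program at `s̄ = (s,β)` for `Q = (Q_r, Q_c)`: among
countably-supported probability distributions on `Ā = A × ℝ` with
`E_{ā∼ρ}[Q_c(s̄,ā)] ≤ β`, it maximizes `E_{ā∼ρ}[Q_r(s̄,ā)]`, and among those
maximizers it minimizes `E_{ā∼ρ}[Q_c(s̄,ā)]`. -/
def IsGreedy {S A : Type} (Q : (S × ℝ) → (A × ℝ) → ℝ × ℝ) (sb : S × ℝ)
    (ρ : CDist (A × ℝ)) : Prop :=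
  Eexp ρ (fun ab => (Q sb ab).2) ≤ sb.2 ∧
  (∀ ρ' : CDist (A × ℝ), Eexp ρ' (fun ab => (Q sb ab).2) ≤ sb.2 →
    Eexp ρ' (fun ab => (Q sb ab).1) ≤ Eexp ρ (fun ab => (Q sb ab).1)) ∧
  (∀ ρ' : CDist (A × ℝ), Eexp ρ' (fun ab => (Q sb ab).2) ≤ sb.2 →
    Eexp ρ' (fun ab => (Q sb ab).1) = Eexp ρ (fun ab => (Q sb ab).1) →
    Eexp ρ (fun ab => (Q sb ab).2) ≤ Eexp ρ' (fun ab => (Q sb ab).2))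

/-- `g` is a greedy selection for `Q`: at every augmented state where the greedy
program admits a solution, `g` is such a solution. -/
def IsSelection {S A : Type} (Q : (S × ℝ) → (A × ℝ) → ℝ × ℝ)
    (g : (S × ℝ) → CDist (A × ℝ)) : Prop :=
  ∀ sb, (∃ ρ, IsGreedy Q sb ρ) → IsGreedy Q sb (g sb)

/-- The Budgeted Bellman Optimality operator (given a greedy selection `g`):
`T Q((s,β),(a,β_a)) = R((s,β),(a,β_a)) + γ Σ_{s'} P(s'|s,a) E_{ā'∼g(s',β_a)}[Q((s',β_a),ā')]`. -/
noncomputable def TQ {S A : Type} [Fintype S]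
    (P : S → A → S → ℝ) (Rr Rc : S → A → ℝ) (γ : ℝ)
    (g : (S × ℝ) → CDist (A × ℝ))
    (Q : (S × ℝ) → (A × ℝ) → ℝ × ℝ) : (S × ℝ) → (A × ℝ) → ℝ × ℝ :=
  fun sb ab => (Rr sb.1 ab.1, Rc sb.1 ab.1) +
    γ • ∑ s' : S, P sb.1 ab.1 s' •
      (Eexp (g (s', ab.2)) (fun ab' => (Q (s', ab.2) ab').1),
       Eexp (g (s', ab.2)) (fun ab' => (Q (s', ab.2) ab').2))

/-- Sup norm `‖Q‖∞` of `Q : S̄ × Ā → ℝ²`. -/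
noncomputable def supN {S A : Type} (Q : (S × ℝ) → (A × ℝ) → ℝ × ℝ) : ℝ :=
  ⨆ p : (S × ℝ) × (A × ℝ), max |(Q p.1 p.2).1| |(Q p.1 p.2).2|

section Helpers

lemma CDist.summable' {α : Type} (ρ : CDist α) : Summable ρ.p := by
  by_contra h
  have := tsum_eq_zero_of_not_summable h
  rw [ρ.sum_one] at this
  norm_num at this

lemma Eexp_summable {α : Type} (ρ : CDist α) (f : α → ℝ) (C : ℝ)
    (hC : ∀ x, |f x| ≤ C) : Summable (fun x => ρ.p x * f x) := by
  apply Summable.of_abs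
  apply Summable.of_nonneg_of_le (fun x => abs_nonneg _) (fun x => ?_)
    (ρ.summable'.mul_right C)
  rw [abs_mul, abs_of_nonneg (ρ.nonneg x)]
  exact mul_le_mul_of_nonneg_left (hC x) (ρ.nonneg x)

lemma abs_Eexp_le {α : Type} [Nonempty α] (ρ : CDist α) (f : α → ℝ) (C : ℝ)
    (hC : ∀ x, |f x| ≤ C) : |Eexp ρ f| ≤ C := by
  have h1 : |Eexp ρ f| ≤ ∑' x, |ρ.p x * f x| := by
    simpa only [Real.norm_eq_abs, Eexp] using
      norm_tsum_le_tsum_norm (f := fun x => ρ.p x * f x)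
        (by simpa only [Real.norm_eq_abs] using (Eexp_summable ρ f C hC).abs)
  refine h1.trans ?_
  have h2 : ∑' x, |ρ.p x * f x| ≤ ∑' x, ρ.p x * C := by
    apply Summable.tsum_le_tsum (fun x => ?_) (Eexp_summable ρ f C hC).abs
      (ρ.summable'.mul_right C)
    rw [abs_mul, abs_of_nonneg (ρ.nonneg x)]
    exact mul_le_mul_of_nonneg_left (hC x) (ρ.nonneg x)
  refine h2.trans ?_
  rw [tsum_mul_right, ρ.sum_one, one_mul]


noncomputable def mass {A : Type} [DecidableEq A] (a0 : A) (ρ : CDist (A × ℝ)) : ℝ :=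
  ∑' x : A × ℝ, if x.1 = a0 then ρ.p x else 0

section Mass
variable {A : Type} [DecidableEq A] (a0 : A) (ρ : CDist (A × ℝ))

lemma mass_summable1 : Summable (fun x : A × ℝ => if x.1 = a0 then ρ.p x else 0) := by
  apply Summable.of_nonneg_of_le (fun x => ?_) (fun x => ?_) ρ.summable'
  · split <;> simp [ρ.nonneg]
  · split <;> simp [ρ.nonneg]

lemma mass_summable2 : Summable (fun x : A × ℝ => if x.1 = a0 then 0 else ρ.p x) := by
  apply Summable.of_nonneg_of_le (fun x => ?_) (fun x => ?_) ρ.summable'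
  · split <;> simp [ρ.nonneg]
  · split <;> simp [ρ.nonneg]

lemma mass_nonneg : 0 ≤ mass a0 ρ := by
  apply tsum_nonneg
  intro x; split <;> simp [ρ.nonneg]

lemma mass_add : mass a0 ρ + (∑' x : A × ℝ, if x.1 = a0 then 0 else ρ.p x) = 1 := by
  rw [mass, ← Summable.tsum_add (mass_summable1 a0 ρ) (mass_summable2 a0 ρ)]
  rw [← ρ.sum_one]
  congr 1; funext x; split <;> ring

lemma mass_le_one : mass a0 ρ ≤ 1 := by
  have h := mass_add a0 ρ
  have h2 : 0 ≤ ∑' x : A × ℝ, if x.1 = a0 then 0 else ρ.p x :=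
    tsum_nonneg (fun x => by split <;> simp [ρ.nonneg])
  linarith

lemma Eexp_ite (c1 c2 : ℝ) :
    Eexp ρ (fun ab => if ab.1 = a0 then c1 else c2)
      = c1 * mass a0 ρ + c2 * (1 - mass a0 ρ) := by
  have key : (fun x : A × ℝ => ρ.p x * (if x.1 = a0 then c1 else c2))
      = fun x => c1 * (if x.1 = a0 then ρ.p x else 0)
        + c2 * (if x.1 = a0 then 0 else ρ.p x) := by
    funext x; split <;> ring
  have h2 : (∑' x : A × ℝ, if x.1 = a0 then 0 else ρ.p x) = 1 - mass a0 ρ := by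
    have := mass_add a0 ρ; linarith
  rw [Eexp, key, Summable.tsum_add ((mass_summable1 a0 ρ).mul_left c1)
    ((mass_summable2 a0 ρ).mul_left c2), tsum_mul_left, tsum_mul_left, h2, mass]

end Mass

noncomputable def dirac {α : Type} [DecidableEq α] (a : α) : CDist α where
  p := fun x => if x = a then 1 else 0
  nonneg := fun x => by split <;> norm_num
  countable_support := by
    apply Set.Countable.mono _ (Set.countable_singleton a)
    intro x hx
    simp only [Function.mem_support] at hx
    by_contra h
    simp [Set.mem_singleton_iff] at h
    simp [h] at hx
  sum_one := tsum_ite_eq a 1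

lemma Eexp_dirac {α : Type} [DecidableEq α] (a : α) (f : α → ℝ) :
    Eexp (dirac a) f = f a := by
  have : (fun x => (dirac a).p x * f x) = fun x => if x = a then f a else 0 := by
    funext x
    simp only [dirac]
    split
    · next h => subst h; ring
    · ring
  rw [Eexp, this, tsum_ite_eq]

lemma mass_dirac {A : Type} [DecidableEq A] (a0 a : A) (β : ℝ) :
    mass a0 (dirac (a, β)) = if a = a0 then 1 else 0 := by
  have : (fun x : A × ℝ => if x.1 = a0 then (dirac (a, β)).p x else 0)
      = fun x => if x = (a, β) then (if a = a0 then (1:ℝ) else 0) else 0 := by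
    funext x
    simp only [dirac]
    by_cases hx : x = (a, β)
    · subst hx; simp
    · have h0 : (dirac (a, β)).p x = 0 := by simp [dirac, hx]
      simp [h0, hx]
  rw [mass, this, tsum_ite_eq]


section Greedy
variable {S A : Type} [DecidableEq A]

lemma Eexp_Q_fst (a0 : A) (v1 v2 : ℝ × ℝ) (Q : (S × ℝ) → (A × ℝ) → ℝ × ℝ)
    (hQ : Q = fun _ ab => if ab.1 = a0 then v1 else v2) (sb : S × ℝ) (ρ : CDist (A × ℝ)) :
    Eexp ρ (fun ab => (Q sb ab).1) = v1.1 * mass a0 ρ + v2.1 * (1 - mass a0 ρ) := by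
  have h : (fun ab : A × ℝ => (Q sb ab).1)
      = fun ab => if ab.1 = a0 then v1.1 else v2.1 := by
    funext ab; simp [hQ, apply_ite Prod.fst]
  rw [h, Eexp_ite]

lemma Eexp_Q_snd (a0 : A) (v1 v2 : ℝ × ℝ) (Q : (S × ℝ) → (A × ℝ) → ℝ × ℝ)
    (hQ : Q = fun _ ab => if ab.1 = a0 then v1 else v2) (sb : S × ℝ) (ρ : CDist (A × ℝ)) :
    Eexp ρ (fun ab => (Q sb ab).2) = v1.2 * mass a0 ρ + v2.2 * (1 - mass a0 ρ) := by
  have h : (fun ab : A × ℝ => (Q sb ab).2)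
      = fun ab => if ab.1 = a0 then v1.2 else v2.2 := by
    funext ab; simp [hQ, apply_ite Prod.snd]
  rw [h, Eexp_ite]

variable (a0 a1 : A) (γ ε : ℝ) (hγ : 0 < γ) (hε : 0 < ε)
  (Q1 Q2 : (S × ℝ) → (A × ℝ) → ℝ × ℝ)
  (hQ1 : Q1 = fun _ ab => if ab.1 = a0 then ((0 : ℝ), (0 : ℝ)) else (1 / γ, ε))
  (hQ2 : Q2 = fun _ ab => if ab.1 = a0 then ((0 : ℝ), ε) else (1 / γ, 2 * ε))

include hγ hε hQ1 in
lemma isGreedy_Q1 (ha : a1 ≠ a0) (s' : S) : IsGreedy Q1 (s', ε) (dirac (a1, 0)) := by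
  have hmd : mass a0 (dirac ((a1 : A), (0:ℝ))) = 0 := by rw [mass_dirac]; simp [ha]
  refine ⟨?_, fun ρ' hρ' => ?_, fun ρ' hρ' heq => ?_⟩
  · rw [Eexp_Q_snd a0 _ _ Q1 hQ1, hmd]; simp
  · rw [Eexp_Q_fst a0 _ _ Q1 hQ1, Eexp_Q_fst a0 _ _ Q1 hQ1, hmd]
    have h1 := mass_nonneg a0 ρ'
    have h2 : 0 < 1 / γ := by positivity
    nlinarith
  · rw [Eexp_Q_fst a0 _ _ Q1 hQ1, Eexp_Q_fst a0 _ _ Q1 hQ1, hmd] at heq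
    have h2 : (1:ℝ) / γ ≠ 0 := by positivity
    have h3 : (1/γ) * (1 - mass a0 ρ') = (1/γ) * 1 := by linarith [heq]
    have hm : mass a0 ρ' = 0 := by
      have := mul_left_cancel₀ h2 h3; linarith
    rw [Eexp_Q_snd a0 _ _ Q1 hQ1, Eexp_Q_snd a0 _ _ Q1 hQ1, hmd, hm]

include hγ hε hQ1 in
lemma greedy_Q1_values (ha : a1 ≠ a0) (s' : S) (ρ : CDist (A × ℝ))
    (hρ : IsGreedy Q1 (s', ε) ρ) :
    Eexp ρ (fun ab => (Q1 (s', ε) ab).1) = 1 / γ ∧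
    Eexp ρ (fun ab => (Q1 (s', ε) ab).2) = ε := by
  have hmd : mass a0 (dirac ((a1 : A), (0:ℝ))) = 0 := by rw [mass_dirac]; simp [ha]
  have hfeas : Eexp (dirac ((a1 : A), (0:ℝ))) (fun ab => (Q1 (s', ε) ab).2)
      ≤ ((s', ε) : S × ℝ).2 := by
    rw [Eexp_Q_snd a0 _ _ Q1 hQ1, hmd]; simp
  have hmax := hρ.2.1 _ hfeas
  rw [Eexp_Q_fst a0 _ _ Q1 hQ1, Eexp_Q_fst a0 _ _ Q1 hQ1, hmd] at hmax
  have h1 := mass_nonneg a0 ρ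
  have h2 : 0 < 1 / γ := by positivity
  have hm : mass a0 ρ = 0 := by nlinarith
  constructor
  · rw [Eexp_Q_fst a0 _ _ Q1 hQ1, hm]; ring
  · rw [Eexp_Q_snd a0 _ _ Q1 hQ1, hm]; ring

include hε hQ2 in
lemma Q2_feasible_mass (sb : S × ℝ) (hb : sb.2 = ε) (ρ : CDist (A × ℝ))
    (hρ : Eexp ρ (fun ab => (Q2 sb ab).2) ≤ sb.2) : mass a0 ρ = 1 := by
  rw [Eexp_Q_snd a0 _ _ Q2 hQ2, hb] at hρ
  have h1 := mass_le_one a0 ρ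
  simp only at hρ
  nlinarith

include hγ hε hQ2 in
lemma isGreedy_Q2 (s' : S) : IsGreedy Q2 (s', ε) (dirac (a0, 0)) := by
  have hmd : mass a0 (dirac ((a0 : A), (0:ℝ))) = 1 := by rw [mass_dirac]; simp
  refine ⟨?_, fun ρ' hρ' => ?_, fun ρ' hρ' heq => ?_⟩
  · rw [Eexp_Q_snd a0 _ _ Q2 hQ2, hmd]; simp
  · have hm' := Q2_feasible_mass a0 γ ε hε Q2 hQ2 _ rfl ρ' hρ'
    rw [Eexp_Q_fst a0 _ _ Q2 hQ2, Eexp_Q_fst a0 _ _ Q2 hQ2, hmd, hm']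
  · have hm' := Q2_feasible_mass a0 γ ε hε Q2 hQ2 _ rfl ρ' hρ'
    rw [Eexp_Q_snd a0 _ _ Q2 hQ2, Eexp_Q_snd a0 _ _ Q2 hQ2, hmd, hm']

include hε hQ2 in
lemma greedy_Q2_values (s' : S) (ρ : CDist (A × ℝ))
    (hρ : IsGreedy Q2 (s', ε) ρ) :
    Eexp ρ (fun ab => (Q2 (s', ε) ab).1) = 0 ∧
    Eexp ρ (fun ab => (Q2 (s', ε) ab).2) = ε := by
  have hm := Q2_feasible_mass a0 γ ε hε Q2 hQ2 _ rfl ρ hρ.1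
  constructor
  · rw [Eexp_Q_fst a0 _ _ Q2 hQ2, hm]; ring
  · rw [Eexp_Q_snd a0 _ _ Q2 hQ2, hm]; ring

end Greedy

section SupN
variable {S A : Type} [Nonempty S] [Nonempty A]

lemma supN_le (Q : (S × ℝ) → (A × ℝ) → ℝ × ℝ) (M : ℝ)
    (hM : ∀ sb ab, max |(Q sb ab).1| |(Q sb ab).2| ≤ M) : supN Q ≤ M :=
  ciSup_le (fun p => hM p.1 p.2)

lemma le_supN (Q : (S × ℝ) → (A × ℝ) → ℝ × ℝ) (M : ℝ)
    (hM : ∀ sb ab, max |(Q sb ab).1| |(Q sb ab).2| ≤ M) (p0 : (S × ℝ) × (A × ℝ)) :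
    max |(Q p0.1 p0.2).1| |(Q p0.1 p0.2).2| ≤ supN Q := by
  apply le_ciSup (f := fun p : (S × ℝ) × (A × ℝ) => max |(Q p.1 p.2).1| |(Q p.1 p.2).2|)
  exact ⟨M, by rintro x ⟨p, rfl⟩; exact hM p.1 p.2⟩

end SupN

section Main
variable {S A : Type} [Fintype S] [Fintype A] [Nonempty S] [Nonempty A] [DecidableEq A]

lemma supN_diff (a0 : A) (γ ε : ℝ) (hε : 0 < ε)
    (Q1 Q2 : (S × ℝ) → (A × ℝ) → ℝ × ℝ)
    (hQ1 : Q1 = fun _ ab => if ab.1 = a0 then ((0 : ℝ), (0 : ℝ)) else (1 / γ, ε))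
    (hQ2 : Q2 = fun _ ab => if ab.1 = a0 then ((0 : ℝ), ε) else (1 / γ, 2 * ε)) :
    supN (fun sb ab => Q1 sb ab - Q2 sb ab) = ε := by
  have hconst : (fun p : (S × ℝ) × (A × ℝ) =>
      max |((fun sb ab => Q1 sb ab - Q2 sb ab) p.1 p.2).1|
        |((fun sb ab => Q1 sb ab - Q2 sb ab) p.1 p.2).2|) = fun _ => ε := by
    funext p
    have hsub : Q1 p.1 p.2 - Q2 p.1 p.2 = ((0:ℝ), -ε) := by
      by_cases h : p.2.1 = a0 <;> simp [hQ1, hQ2, h, Prod.ext_iff] <;> try ring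
    dsimp only
    rw [hsub]
    simp only [abs_neg, abs_zero, abs_of_nonneg hε.le]
    exact max_eq_right hε.le
  rw [supN, hconst, ciSup_const]

lemma Q_comp_bound (a0 : A) (γ ε : ℝ) (hγ : 0 < γ) (hε : 0 < ε)
    (Q1 Q2 : (S × ℝ) → (A × ℝ) → ℝ × ℝ)
    (hQ1 : Q1 = fun _ ab => if ab.1 = a0 then ((0 : ℝ), (0 : ℝ)) else (1 / γ, ε))
    (hQ2 : Q2 = fun _ ab => if ab.1 = a0 then ((0 : ℝ), ε) else (1 / γ, 2 * ε)) :
    ∀ sb ab, (|(Q1 sb ab).1| ≤ 1 / γ + 2 * ε ∧ |(Q1 sb ab).2| ≤ 1 / γ + 2 * ε) ∧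
      (|(Q2 sb ab).1| ≤ 1 / γ + 2 * ε ∧ |(Q2 sb ab).2| ≤ 1 / γ + 2 * ε) := by
  intro sb ab
  have hγ' : 0 < 1 / γ := by positivity
  have h0 : |(0:ℝ)| ≤ 1 / γ + 2 * ε := by rw [abs_zero]; positivity
  have hεb : |ε| ≤ 1 / γ + 2 * ε := by rw [abs_of_nonneg hε.le]; linarith
  have h2εb : |2 * ε| ≤ 1 / γ + 2 * ε := by
    rw [abs_of_nonneg (by positivity : (0:ℝ) ≤ 2 * ε)]; linarith
  have hγb : |1 / γ| ≤ 1 / γ + 2 * ε := by rw [abs_of_nonneg hγ'.le]; linarith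
  refine ⟨⟨?_, ?_⟩, ?_, ?_⟩ <;>
    · simp only [hQ1, hQ2, apply_ite Prod.fst, apply_ite Prod.snd]
      split <;> first | exact h0 | exact hεb | exact h2εb | exact hγb

lemma TQ_diff_bound (P : S → A → S → ℝ) (hP0 : ∀ s a s', 0 ≤ P s a s')
    (hP1 : ∀ s a, ∑ s', P s a s' = 1) (Rr Rc : S → A → ℝ)
    (a0 : A) (γ ε : ℝ) (hγ : 0 < γ) (hε : 0 < ε)
    (g1 g2 : (S × ℝ) → CDist (A × ℝ))
    (Q1 Q2 : (S × ℝ) → (A × ℝ) → ℝ × ℝ)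
    (hQ1 : Q1 = fun _ ab => if ab.1 = a0 then ((0 : ℝ), (0 : ℝ)) else (1 / γ, ε))
    (hQ2 : Q2 = fun _ ab => if ab.1 = a0 then ((0 : ℝ), ε) else (1 / γ, 2 * ε)) :
    ∀ sb ab, max |(TQ P Rr Rc γ g1 Q1 sb ab - TQ P Rr Rc γ g2 Q2 sb ab).1|
      |(TQ P Rr Rc γ g1 Q1 sb ab - TQ P Rr Rc γ g2 Q2 sb ab).2|
      ≤ γ * (2 * (1 / γ + 2 * ε)) := by
  intro sb ab
  set C : ℝ := 1 / γ + 2 * ε with hC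
  have hC0 : 0 < C := by positivity
  have hQb := Q_comp_bound a0 γ ε hγ hε Q1 Q2 hQ1 hQ2
  set er1 : S → ℝ := fun s' => Eexp (g1 (s', ab.2)) (fun ab' => (Q1 (s', ab.2) ab').1)
  set ec1 : S → ℝ := fun s' => Eexp (g1 (s', ab.2)) (fun ab' => (Q1 (s', ab.2) ab').2)
  set er2 : S → ℝ := fun s' => Eexp (g2 (s', ab.2)) (fun ab' => (Q2 (s', ab.2) ab').1)
  set ec2 : S → ℝ := fun s' => Eexp (g2 (s', ab.2)) (fun ab' => (Q2 (s', ab.2) ab').2)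
  have her1 : ∀ s', |er1 s'| ≤ C := fun s' =>
    abs_Eexp_le _ _ _ (fun x => (hQb _ x).1.1)
  have hec1 : ∀ s', |ec1 s'| ≤ C := fun s' =>
    abs_Eexp_le _ _ _ (fun x => (hQb _ x).1.2)
  have her2 : ∀ s', |er2 s'| ≤ C := fun s' =>
    abs_Eexp_le _ _ _ (fun x => (hQb _ x).2.1)
  have hec2 : ∀ s', |ec2 s'| ≤ C := fun s' =>
    abs_Eexp_le _ _ _ (fun x => (hQb _ x).2.2)
  have key : ∀ (u1 u2 : S → ℝ), (∀ s', |u1 s'| ≤ C) → (∀ s', |u2 s'| ≤ C) →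
      |γ * ∑ s' : S, P sb.1 ab.1 s' * (u1 s' - u2 s')| ≤ γ * (2 * C) := by
    intro u1 u2 h1 h2
    rw [abs_mul, abs_of_pos hγ]
    apply mul_le_mul_of_nonneg_left _ hγ.le
    calc |∑ s' : S, P sb.1 ab.1 s' * (u1 s' - u2 s')|
        ≤ ∑ s' : S, |P sb.1 ab.1 s' * (u1 s' - u2 s')| := Finset.abs_sum_le_sum_abs _ _
      _ ≤ ∑ s' : S, P sb.1 ab.1 s' * (2 * C) := by
          apply Finset.sum_le_sum
          intro i _
          rw [abs_mul, abs_of_nonneg (hP0 _ _ _)]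
          apply mul_le_mul_of_nonneg_left _ (hP0 _ _ _)
          calc |u1 i - u2 i| ≤ |u1 i| + |u2 i| := abs_sub _ _
            _ ≤ 2 * C := by linarith [h1 i, h2 i]
      _ = 2 * C := by rw [← Finset.sum_mul, hP1, one_mul]
  have e1 : (TQ P Rr Rc γ g1 Q1 sb ab - TQ P Rr Rc γ g2 Q2 sb ab).1
      = γ * ∑ s' : S, P sb.1 ab.1 s' * (er1 s' - er2 s') := by
    simp only [TQ, Prod.fst_sub, Prod.fst_add, Prod.smul_fst, Prod.fst_sum,
      smul_eq_mul, mul_sub, Finset.sum_sub_distrib, Finset.mul_sum]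
    ring
  have e2 : (TQ P Rr Rc γ g1 Q1 sb ab - TQ P Rr Rc γ g2 Q2 sb ab).2
      = γ * ∑ s' : S, P sb.1 ab.1 s' * (ec1 s' - ec2 s') := by
    simp only [TQ, Prod.snd_sub, Prod.snd_add, Prod.smul_snd, Prod.snd_sum,
      smul_eq_mul, mul_sub, Finset.sum_sub_distrib, Finset.mul_sum]
    ring
  rw [e1, e2]
  exact max_le (key _ _ her1 her2) (key _ _ hec1 hec2)

lemma TQ_diff_at (P : S → A → S → ℝ) (hP1 : ∀ s a, ∑ s', P s a s' = 1)
    (Rr Rc : S → A → ℝ) (a0 a1 : A) (ha : a1 ≠ a0) (γ ε : ℝ) (hγ : 0 < γ) (hε : 0 < ε)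
    (g1 g2 : (S × ℝ) → CDist (A × ℝ))
    (Q1 Q2 : (S × ℝ) → (A × ℝ) → ℝ × ℝ)
    (hQ1 : Q1 = fun _ ab => if ab.1 = a0 then ((0 : ℝ), (0 : ℝ)) else (1 / γ, ε))
    (hQ2 : Q2 = fun _ ab => if ab.1 = a0 then ((0 : ℝ), ε) else (1 / γ, 2 * ε))
    (hg1 : IsSelection Q1 g1) (hg2 : IsSelection Q2 g2)
    (sb : S × ℝ) (a : A) :
    TQ P Rr Rc γ g1 Q1 sb (a, ε) - TQ P Rr Rc γ g2 Q2 sb (a, ε) = ((1:ℝ), (0:ℝ)) := by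
  have hv1 : ∀ s' : S,
      Eexp (g1 (s', ε)) (fun ab' => (Q1 (s', ε) ab').1) = 1 / γ ∧
      Eexp (g1 (s', ε)) (fun ab' => (Q1 (s', ε) ab').2) = ε := by
    intro s'
    exact greedy_Q1_values a0 a1 γ ε hγ hε Q1 hQ1 ha s' _
      (hg1 (s', ε) ⟨_, isGreedy_Q1 a0 a1 γ ε hγ hε Q1 hQ1 ha s'⟩)
  have hv2 : ∀ s' : S,
      Eexp (g2 (s', ε)) (fun ab' => (Q2 (s', ε) ab').1) = 0 ∧
      Eexp (g2 (s', ε)) (fun ab' => (Q2 (s', ε) ab').2) = ε := by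
    intro s'
    exact greedy_Q2_values a0 γ ε hε Q2 hQ2 s' _
      (hg2 (s', ε) ⟨_, isGreedy_Q2 a0 γ ε hγ hε Q2 hQ2 s'⟩)
  have h1 : ∑ s' : S, P sb.1 a s' •
      (Eexp (g1 (s', ε)) (fun ab' => (Q1 (s', ε) ab').1),
       Eexp (g1 (s', ε)) (fun ab' => (Q1 (s', ε) ab').2))
      = ∑ s' : S, P sb.1 a s' • (((1:ℝ) / γ, ε) : ℝ × ℝ) :=
    Finset.sum_congr rfl (fun s' _ => by rw [(hv1 s').1, (hv1 s').2])
  have h2 : ∑ s' : S, P sb.1 a s' •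
      (Eexp (g2 (s', ε)) (fun ab' => (Q2 (s', ε) ab').1),
       Eexp (g2 (s', ε)) (fun ab' => (Q2 (s', ε) ab').2))
      = ∑ s' : S, P sb.1 a s' • (((0:ℝ), ε) : ℝ × ℝ) :=
    Finset.sum_congr rfl (fun s' _ => by rw [(hv2 s').1, (hv2 s').2])
  show (Rr sb.1 a, Rc sb.1 a) + γ • ∑ s' : S, P sb.1 a s' • _
    - ((Rr sb.1 a, Rc sb.1 a) + γ • ∑ s' : S, P sb.1 a s' • _) = _
  rw [h1, h2, ← Finset.sum_smul, ← Finset.sum_smul, hP1, one_smul, one_smul]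
  have hγ0 : γ ≠ 0 := ne_of_gt hγ
  simp only [Prod.smul_mk, smul_eq_mul, Prod.mk_add_mk, Prod.mk_sub_mk, Prod.mk.injEq]
  constructor
  · field_simp; ring
  · ring

lemma one_le_supN_TQ_diff (P : S → A → S → ℝ) (hP0 : ∀ s a s', 0 ≤ P s a s')
    (hP1 : ∀ s a, ∑ s', P s a s' = 1) (Rr Rc : S → A → ℝ)
    (a0 a1 : A) (ha : a1 ≠ a0) (γ ε : ℝ) (hγ : 0 < γ) (hε : 0 < ε)
    (g1 g2 : (S × ℝ) → CDist (A × ℝ))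
    (Q1 Q2 : (S × ℝ) → (A × ℝ) → ℝ × ℝ)
    (hQ1 : Q1 = fun _ ab => if ab.1 = a0 then ((0 : ℝ), (0 : ℝ)) else (1 / γ, ε))
    (hQ2 : Q2 = fun _ ab => if ab.1 = a0 then ((0 : ℝ), ε) else (1 / γ, 2 * ε))
    (hg1 : IsSelection Q1 g1) (hg2 : IsSelection Q2 g2) :
    1 ≤ supN (fun sb ab => TQ P Rr Rc γ g1 Q1 sb ab - TQ P Rr Rc γ g2 Q2 sb ab) := by
  have hbd := TQ_diff_bound P hP0 hP1 Rr Rc a0 γ ε hγ hε g1 g2 Q1 Q2 hQ1 hQ2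
  have hpt := TQ_diff_at P hP1 Rr Rc a0 a1 ha γ ε hγ hε g1 g2 Q1 Q2 hQ1 hQ2 hg1 hg2
    (Classical.arbitrary S, 0) a0
  have hle := le_supN (fun sb ab => TQ P Rr Rc γ g1 Q1 sb ab - TQ P Rr Rc γ g2 Q2 sb ab)
    _ hbd ((Classical.arbitrary S, 0), (a0, ε))
  dsimp only at hle
  rw [hpt] at hle
  simpa using hle

end Main

end Helpers

/-- (Non-contractivity of the Budgeted Bellman Optimality operator.) With `|A| ≥ 2`,
`a₀ ∈ A` and `ε > 0`, the functions `Q¹_ε, Q²_ε` defined in the statement satisfy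
`‖Q¹_ε − Q²_ε‖∞ = ε`; the greedy programs needed to evaluate `T Q¹_ε` and `T Q²_ε`
at states with budget `ε` have solutions with uniquely determined values; and
`‖T Q¹_ε − T Q²_ε‖∞ ≥ 1 = (1/ε)‖Q¹_ε − Q²_ε‖∞`. Consequently, any operator `T'`
implementing the Budgeted Bellman Optimality operator admits no Lipschitz constant
with respect to `‖·‖∞`: it is not a contraction. -/
theorem bellman_optimality_not_contraction
    {S A : Type} [Fintype S] [Fintype A] [Nonempty S] [Nonempty A] [DecidableEq A]
    (P : S → A → S → ℝ) (hP0 : ∀ s a s', 0 ≤ P s a s') (hP1 : ∀ s a, ∑ s', P s a s' = 1)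
    (Rr Rc : S → A → ℝ) (γ : ℝ) (hγ0 : 0 < γ) (hγ1 : γ < 1)
    (a0 : A) (hA : 2 ≤ Fintype.card A)
    (ε : ℝ) (hε : 0 < ε)
    (Q1 Q2 : (S × ℝ) → (A × ℝ) → ℝ × ℝ)
    (hQ1 : Q1 = fun _ ab => if ab.1 = a0 then ((0 : ℝ), (0 : ℝ)) else (1 / γ, ε))
    (hQ2 : Q2 = fun _ ab => if ab.1 = a0 then ((0 : ℝ), ε) else (1 / γ, 2 * ε)) :
    supN (fun sb ab => Q1 sb ab - Q2 sb ab) = ε ∧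
    (∀ s' : S,
      ((∃ ρ, IsGreedy Q1 (s', ε) ρ) ∧
        ∀ ρ ρ', IsGreedy Q1 (s', ε) ρ → IsGreedy Q1 (s', ε) ρ' →
          Eexp ρ (fun ab => (Q1 (s', ε) ab).1) = Eexp ρ' (fun ab => (Q1 (s', ε) ab).1) ∧
          Eexp ρ (fun ab => (Q1 (s', ε) ab).2) = Eexp ρ' (fun ab => (Q1 (s', ε) ab).2)) ∧
      ((∃ ρ, IsGreedy Q2 (s', ε) ρ) ∧
        ∀ ρ ρ', IsGreedy Q2 (s', ε) ρ → IsGreedy Q2 (s', ε) ρ' →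
          Eexp ρ (fun ab => (Q2 (s', ε) ab).1) = Eexp ρ' (fun ab => (Q2 (s', ε) ab).1) ∧
          Eexp ρ (fun ab => (Q2 (s', ε) ab).2) = Eexp ρ' (fun ab => (Q2 (s', ε) ab).2))) ∧
    (∀ g1 g2 : (S × ℝ) → CDist (A × ℝ), IsSelection Q1 g1 → IsSelection Q2 g2 →
      1 ≤ supN (fun sb ab => TQ P Rr Rc γ g1 Q1 sb ab - TQ P Rr Rc γ g2 Q2 sb ab) ∧
      (1 : ℝ) = (1 / ε) * supN (fun sb ab => Q1 sb ab - Q2 sb ab)) ∧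
    (∀ T' : ((S × ℝ) → (A × ℝ) → ℝ × ℝ) → ((S × ℝ) → (A × ℝ) → ℝ × ℝ),
      (∀ Q, BoundedQ Q → ∃ g, IsSelection Q g ∧ T' Q = TQ P Rr Rc γ g Q) →
      ¬ ∃ L : ℝ, ∀ Qa Qb, BoundedQ Qa → BoundedQ Qb →
        supN (fun sb ab => T' Qa sb ab - T' Qb sb ab)
          ≤ L * supN (fun sb ab => Qa sb ab - Qb sb ab)) := by
  obtain ⟨a1, ha⟩ := Fintype.exists_ne_of_one_lt_card (by omega : 1 < Fintype.card A) a0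
  refine ⟨supN_diff a0 γ ε hε Q1 Q2 hQ1 hQ2, ?_, ?_, ?_⟩
  · intro s'
    refine ⟨⟨⟨_, isGreedy_Q1 a0 a1 γ ε hγ0 hε Q1 hQ1 ha s'⟩, ?_⟩,
      ⟨_, isGreedy_Q2 a0 γ ε hγ0 hε Q2 hQ2 s'⟩, ?_⟩
    · intro ρ ρ' hρ hρ'
      have h1 := greedy_Q1_values a0 a1 γ ε hγ0 hε Q1 hQ1 ha s' ρ hρ
      have h2 := greedy_Q1_values a0 a1 γ ε hγ0 hε Q1 hQ1 ha s' ρ' hρ'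
      rw [h1.1, h1.2, h2.1, h2.2]; exact ⟨rfl, rfl⟩
    · intro ρ ρ' hρ hρ'
      have h1 := greedy_Q2_values a0 γ ε hε Q2 hQ2 s' ρ hρ
      have h2 := greedy_Q2_values a0 γ ε hε Q2 hQ2 s' ρ' hρ'
      rw [h1.1, h1.2, h2.1, h2.2]; exact ⟨rfl, rfl⟩
  · intro g1 g2 hg1 hg2
    refine ⟨one_le_supN_TQ_diff P hP0 hP1 Rr Rc a0 a1 ha γ ε hγ0 hε g1 g2
      Q1 Q2 hQ1 hQ2 hg1 hg2, ?_⟩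
    rw [supN_diff a0 γ ε hε Q1 Q2 hQ1 hQ2]
    field_simp
  · intro T' hT' ⟨L, hL⟩
    set ε' : ℝ := min ε (1 / (|L| + 1)) with hε'def
    have hε' : 0 < ε' := lt_min hε (by positivity)
    set Q1' : (S × ℝ) → (A × ℝ) → ℝ × ℝ :=
      fun _ ab => if ab.1 = a0 then ((0 : ℝ), (0 : ℝ)) else (1 / γ, ε') with hQ1'
    set Q2' : (S × ℝ) → (A × ℝ) → ℝ × ℝ :=
      fun _ ab => if ab.1 = a0 then ((0 : ℝ), ε') else (1 / γ, 2 * ε') with hQ2'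
    have hQb := Q_comp_bound a0 γ ε' hγ0 hε' Q1' Q2' hQ1' hQ2'
    have hB1 : BoundedQ Q1' :=
      ⟨1 / γ + 2 * ε', fun sb ab => max_le (hQb sb ab).1.1 (hQb sb ab).1.2⟩
    have hB2 : BoundedQ Q2' :=
      ⟨1 / γ + 2 * ε', fun sb ab => max_le (hQb sb ab).2.1 (hQb sb ab).2.2⟩
    obtain ⟨g1, hg1, hT1⟩ := hT' Q1' hB1
    obtain ⟨g2, hg2, hT2⟩ := hT' Q2' hB2
    have h1 : 1 ≤ supN (fun sb ab => T' Q1' sb ab - T' Q2' sb ab) := by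
      rw [hT1, hT2]
      exact one_le_supN_TQ_diff P hP0 hP1 Rr Rc a0 a1 ha γ ε' hγ0 hε' g1 g2
        Q1' Q2' hQ1' hQ2' hg1 hg2
    have h2 := hL Q1' Q2' hB1 hB2
    rw [supN_diff a0 γ ε' hε' Q1' Q2' hQ1' hQ2'] at h2
    have h3 : L * ε' < 1 := by
      calc L * ε' ≤ |L| * ε' := mul_le_mul_of_nonneg_right (le_abs_self L) hε'.le
        _ ≤ |L| * (1 / (|L| + 1)) :=
            mul_le_mul_of_nonneg_left (min_le_right _ _) (abs_nonneg L)
        _ < 1 := by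
            rw [mul_one_div, div_lt_one (by positivity)]
            linarith
    linarith
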